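/- arXiv:1904.13110 — 5 statements merged into one kernel-verified Lean document; each statement's English description precedes it below -/
import Mathlib

section
/- With the setting of the previous context, the two eigenvalues of H_s = (I_s + μ·diag(G_{s−1,1}, 0))^{-1}(I_s + μ G_{s,1}) that may differ from 1 are λ_min = 1 − √(1 − d_s) and λ_max = 1 + √(1 − d_s), where d_s = 1 / (e_s^T (I_s + μ G_{s,1})^{-1} e_s). -/
open Matrix

noncomputable def jacobiMatrix (s : ℕ) (b : ℕ → ℝ) : Matrix (Fin s) (Fin s) ℝ :=
  Matrix.of fun i j =>
    if (i : ℕ) + 1 = (j : ℕ) then Real.sqrt (b ((i : ℕ) + 1))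
    else if (j : ℕ) + 1 = (i : ℕ) then Real.sqrt (b ((j : ℕ) + 1)) else 0

noncomputable def jacobiMatrixTrunc (s : ℕ) (b : ℕ → ℝ) : Matrix (Fin s) (Fin s) ℝ :=
  Matrix.of fun i j =>
    if (i : ℕ) + 1 = s ∨ (j : ℕ) + 1 = s then 0 else jacobiMatrix s b i j

lemma jacobi_decomp (m : ℕ) (b : ℕ → ℝ) :
    jacobiMatrix (m+2) b = jacobiMatrixTrunc (m+2) b
      + Real.sqrt (b (m+1)) •
        (Matrix.single (⟨m, by omega⟩ : Fin (m+2)) (⟨m+1, by omega⟩ : Fin (m+2)) 1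
          + Matrix.single (⟨m+1, by omega⟩ : Fin (m+2)) (⟨m, by omega⟩ : Fin (m+2)) 1) := by
  ext i j
  obtain ⟨i, hi⟩ := i
  obtain ⟨j, hj⟩ := j
  simp only [jacobiMatrix, jacobiMatrixTrunc, Matrix.add_apply, Matrix.smul_apply,
    Matrix.of_apply, Matrix.single, Fin.mk.injEq, smul_eq_mul]
  split_ifs <;> first | omega | (obtain ⟨rfl, rfl⟩ := ‹_ ∧ _›; ring_nf) | ring_nf

lemma jacobi_symm (s : ℕ) (b : ℕ → ℝ) : (jacobiMatrix s b)ᵀ = jacobiMatrix s b := by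
  ext i j
  simp only [jacobiMatrix, transpose_apply, Matrix.of_apply]
  split_ifs <;> first | rfl | omega

lemma trunc_symm (s : ℕ) (b : ℕ → ℝ) : (jacobiMatrixTrunc s b)ᵀ = jacobiMatrixTrunc s b := by
  ext i j
  simp only [jacobiMatrixTrunc, jacobiMatrix, transpose_apply, Matrix.of_apply]
  split_ifs <;> first | rfl | omega

lemma quad (m : ℕ) (b : ℕ → ℝ) (μ : ℝ) (x : Fin (m+2) → ℝ) :
    x ⬝ᵥ (((1 : Matrix (Fin (m+2)) (Fin (m+2)) ℝ) + μ • jacobiMatrixTrunc (m+2) b) *ᵥ x)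
      = (Fin.init x) ⬝ᵥ (((1 : Matrix (Fin (m+1)) (Fin (m+1)) ℝ)
            + μ • jacobiMatrix (m+1) b) *ᵥ Fin.init x)
        + x (Fin.last (m+1)) ^ 2 := by
  have hcc : ∀ i j : Fin (m+1),
      ((1 : Matrix (Fin (m+2)) (Fin (m+2)) ℝ) + μ • jacobiMatrixTrunc (m+2) b)
          i.castSucc j.castSucc
        = ((1 : Matrix (Fin (m+1)) (Fin (m+1)) ℝ) + μ • jacobiMatrix (m+1) b) i j := by
    intro i j
    simp only [Matrix.add_apply, Matrix.smul_apply, Matrix.one_apply, jacobiMatrixTrunc,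
      jacobiMatrix, Matrix.of_apply, Fin.coe_castSucc, Fin.castSucc_inj, smul_eq_mul]
    have hi := i.isLt; have hj := j.isLt
    congr 1
    split_ifs <;> first | rfl | omega
  have hcol : ∀ i : Fin (m+1),
      ((1 : Matrix (Fin (m+2)) (Fin (m+2)) ℝ) + μ • jacobiMatrixTrunc (m+2) b)
        i.castSucc (Fin.last (m+1)) = 0 := by
    intro i
    have hi := i.isLt
    simp only [Matrix.add_apply, Matrix.smul_apply, Matrix.one_apply, jacobiMatrixTrunc,
      Matrix.of_apply, smul_eq_mul]
    rw [if_neg, if_pos] <;> simp [Fin.ext_iff, Fin.last] <;> omega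
  have hrow : ∀ j : Fin (m+1),
      ((1 : Matrix (Fin (m+2)) (Fin (m+2)) ℝ) + μ • jacobiMatrixTrunc (m+2) b)
        (Fin.last (m+1)) j.castSucc = 0 := by
    intro j
    have hj := j.isLt
    simp only [Matrix.add_apply, Matrix.smul_apply, Matrix.one_apply, jacobiMatrixTrunc,
      Matrix.of_apply, smul_eq_mul]
    rw [if_neg, if_pos] <;> simp [Fin.ext_iff, Fin.last] <;> omega
  have hll : ((1 : Matrix (Fin (m+2)) (Fin (m+2)) ℝ) + μ • jacobiMatrixTrunc (m+2) b)
      (Fin.last (m+1)) (Fin.last (m+1)) = 1 := by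
    simp [Matrix.add_apply, Matrix.one_apply, jacobiMatrixTrunc, Fin.last]
  simp only [dotProduct, mulVec, Fin.sum_univ_castSucc, dotProduct, hcc, hcol, hrow, hll,
    Fin.init, mul_zero, zero_mul, add_zero, Finset.sum_const_zero, zero_add, mul_one]
  ring

lemma trunc_posdef (m : ℕ) (b : ℕ → ℝ) (μ : ℝ)
    (hpd' : ((1 : Matrix (Fin (m+1)) (Fin (m+1)) ℝ) + μ • jacobiMatrix (m+1) b).PosDef) :
    ((1 : Matrix (Fin (m+2)) (Fin (m+2)) ℝ) + μ • jacobiMatrixTrunc (m+2) b).PosDef := by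
  rw [posDef_iff_dotProduct_mulVec]
  constructor
  · show _ᴴ = _
    rw [conjTranspose_eq_transpose_of_trivial, transpose_add, transpose_one, transpose_smul,
      trunc_symm]
  · intro x hx
    rw [star_trivial, quad]
    by_cases h0 : Fin.init x = 0
    · have hlast : x (Fin.last (m+1)) ≠ 0 := by
        intro hl
        apply hx
        funext i
        refine Fin.lastCases ?_ ?_ i
        · exact hl
        · intro j; exact congrFun h0 j
      rw [h0]
      simp only [mulVec_zero, dotProduct_zero, zero_add]
      positivity
    · have h1 := hpd'.dotProduct_mulVec_pos h0
      rw [star_trivial] at h1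
      nlinarith [sq_nonneg (x (Fin.last (m+1)))]

/-- each eigenvalue of H_s equals 1, 1 − √(1 − d_s) or 1 + √(1 − d_s),
where d_s = 1/(e_s^T (I + μ G_{s,1})⁻¹ e_s)  (Lemma 4.9). -/
theorem stmt_5 (s : ℕ) (hs : 2 ≤ s) (b : ℕ → ℝ) (hb : ∀ n, 0 < b n) (μ : ℝ) (hμ : 0 ≤ μ)
    (hpd : ((1 : Matrix (Fin s) (Fin s) ℝ) + μ • jacobiMatrix s b).PosDef)
    (hpd' : ((1 : Matrix (Fin (s - 1)) (Fin (s - 1)) ℝ) + μ • jacobiMatrix (s - 1) b).PosDef)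
    (es : Fin s → ℝ) (hes : es = fun i : Fin s => if (i : ℕ) + 1 = s then (1:ℝ) else 0)
    (d : ℝ)
    (hd : d = 1 / (es ⬝ᵥ (((1 : Matrix (Fin s) (Fin s) ℝ) + μ • jacobiMatrix s b)⁻¹ *ᵥ es))) :
    ∀ (c : ℝ) (v : Fin s → ℝ), v ≠ 0 →
      (((1 : Matrix (Fin s) (Fin s) ℝ) + μ • jacobiMatrixTrunc s b)⁻¹ *
          ((1 : Matrix (Fin s) (Fin s) ℝ) + μ • jacobiMatrix s b)) *ᵥ v = c • v →
        c = 1 ∨ c = 1 - Real.sqrt (1 - d) ∨ c = 1 + Real.sqrt (1 - d) := by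
  obtain ⟨m, rfl⟩ : ∃ m, s = m + 2 := ⟨s - 2, by omega⟩
  intro c v hv hcv
  set A : Matrix (Fin (m+2)) (Fin (m+2)) ℝ := 1 + μ • jacobiMatrix (m+2) b with hA
  set B : Matrix (Fin (m+2)) (Fin (m+2)) ℝ := 1 + μ • jacobiMatrixTrunc (m+2) b with hB
  set p : Fin (m+2) := ⟨m, by omega⟩ with hp
  set l : Fin (m+2) := ⟨m+1, by omega⟩ with hl
  set r : ℝ := Real.sqrt (b (m+1)) with hr
  set K : ℝ := μ * r with hK
  set sp : Fin (m+2) → ℝ := Pi.single p 1 with hsp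
  set sl : Fin (m+2) → ℝ := Pi.single l 1 with hsl
  have hpl : p ≠ l := by simp only [hp, hl, ne_eq, Fin.mk.injEq]; omega
  have hslp : sl p = 0 := Pi.single_eq_of_ne hpl 1
  have hsll : sl l = 1 := Pi.single_eq_same l 1
  have hBpd : B.PosDef := trunc_posdef m b μ hpd'
  have hBdet : IsUnit B.det := hBpd.det_pos.ne'.isUnit
  have hAdet : IsUnit A.det := hpd.det_pos.ne'.isUnit
  have hBsymm : Bᵀ = B := by rw [hB, transpose_add, transpose_one, transpose_smul, trunc_symm]
  have hBinv_symm : (B⁻¹)ᵀ = B⁻¹ := by rw [transpose_nonsing_inv, hBsymm]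
  have hBi : ∀ x : Fin (m+2) → ℝ, B⁻¹ *ᵥ (B *ᵥ x) = x := by
    intro x; rw [mulVec_mulVec, nonsing_inv_mul _ hBdet, one_mulVec]
  have hes1 : es = sl := by
    rw [hes, hsl]
    funext i
    obtain ⟨i, hi⟩ := i
    rw [Pi.single_apply]
    refine if_congr ?_ rfl rfl
    rw [hl, Fin.ext_iff]
    show i + 1 = m + 2 ↔ i = m + 1
    omega
  -- column l of B is the standard basis vector
  have hBcol : ∀ i : Fin (m+2), B i l = if i = l then 1 else 0 := by
    intro i
    have h0 : jacobiMatrixTrunc (m+2) b i l = 0 := by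
      simp only [jacobiMatrixTrunc, Matrix.of_apply]
      exact if_pos (Or.inr rfl)
    simp only [hB, Matrix.add_apply, Matrix.smul_apply, h0, smul_eq_mul, mul_zero, add_zero,
      Matrix.one_apply]
  have hBsl : B *ᵥ sl = sl := by
    rw [hsl, mulVec_single_one]; funext i; rw [Matrix.col_apply, hBcol i, Pi.single_apply]
  have hBisl : B⁻¹ *ᵥ sl = sl := by conv_lhs => rw [← hBsl, hBi]
  set w0 : Fin (m+2) → ℝ := B⁻¹ *ᵥ sp with hw0
  set t : ℝ := w0 p with ht
  have hw0l : w0 l = 0 := by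
    have h2 : B⁻¹ p l = 0 := by
      have := congrFun hBisl p
      rw [hsl, mulVec_single] at this
      simpa [Pi.single_eq_of_ne hpl] using this
    have h3 : B⁻¹ l p = B⁻¹ p l := by
      rw [← transpose_apply B⁻¹ p l, hBinv_symm]
    rw [hw0, hsp, mulVec_single]
    simp [h3, h2]
  -- key decomposition of A *ᵥ w
  have hkey : ∀ w : Fin (m+2) → ℝ,
      A *ᵥ w = B *ᵥ w + (K * w l) • sp + (K * w p) • sl := by
    intro w
    rw [hA, hB, jacobi_decomp m b, ← hp, ← hl, ← hr]
    funext i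
    simp only [add_mulVec, smul_mulVec, smul_add, single_mulVec, one_mulVec,
      Pi.add_apply, Pi.smul_apply, smul_eq_mul, Function.update_apply, Pi.zero_apply,
      hsp, hsl, Pi.single_apply, hK]
    split_ifs <;> first
      | ring
      | (exfalso; apply hpl; simp_all)
  -- A *ᵥ v = c • (B *ᵥ v)
  have hAv : A *ᵥ v = c • (B *ᵥ v) := by
    have h1 : B *ᵥ ((B⁻¹ * A) *ᵥ v) = B *ᵥ (c • v) := by rw [hcv]
    rwa [mulVec_mulVec, ← Matrix.mul_assoc, mul_nonsing_inv _ hBdet, Matrix.one_mul,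
      mulVec_smul] at h1
  by_cases hc : c = 1
  · exact Or.inl hc
  have hc1 : c - 1 ≠ 0 := sub_ne_zero.2 hc
  -- eigen equation gives (c-1)² = K² t
  have h2 : (c - 1) • (B *ᵥ v) = (K * v l) • sp + (K * v p) • sl := by
    have h0 : c • (B *ᵥ v) = B *ᵥ v + (K * v l) • sp + (K * v p) • sl := by
      rw [← hAv, hkey]
    rw [sub_smul, one_smul, h0]; abel
  have h3 : B *ᵥ v = (c-1)⁻¹ • ((K * v l) • sp + (K * v p) • sl) := by
    rw [← h2, smul_smul, inv_mul_cancel₀ hc1, one_smul]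
  have h4 : v = (c-1)⁻¹ • ((K * v l) • w0 + (K * v p) • sl) := by
    have h5 := hBi v
    rw [h3, mulVec_smul, mulVec_add, mulVec_smul, mulVec_smul, ← hw0, hBisl] at h5
    exact h5.symm
  have hvp : v p = (c-1)⁻¹ * (K * v l * t) := by
    have := congrFun h4 p
    simpa [hslp, ht, mul_assoc] using this
  have hvl : v l = (c-1)⁻¹ * (K * v p) := by
    have := congrFun h4 l
    simpa [hsll, hw0l] using this
  have hvl0 : v l ≠ 0 := by
    intro h0
    apply hv
    have hvp0 : v p = 0 := by rw [hvp, h0]; ring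
    rw [h0, hvp0] at h4
    simpa using h4
  have hKt : K^2 * t = (c-1)^2 := by
    have h6 : (c-1) * v l = K * v p := by rw [hvl]; field_simp
    have h7 : (c-1) * v p = K * (v l * t) := by rw [hvp]; field_simp
    have h8 : (c-1)^2 * v l = K^2 * t * v l := by
      calc (c-1)^2 * v l = (c-1)*((c-1)*v l) := by ring
        _ = (c-1)*(K * v p) := by rw [h6]
        _ = K * ((c-1) * v p) := by ring
        _ = K * (K * (v l * t)) := by rw [h7]
        _ = K^2 * t * v l := by ring
    exact (mul_right_cancel₀ hvl0 h8).symm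
  -- now compute d
  set u : Fin (m+2) → ℝ := A⁻¹ *ᵥ sl with hu
  have hd' : d = 1 / u l := by
    rw [hd, hes1, single_dotProduct, one_mul, hu]
  have hAu : A *ᵥ u = sl := by
    rw [hu, mulVec_mulVec, mul_nonsing_inv _ hAdet, one_mulVec]
  have h9 : B *ᵥ u = sl - ((K * u l) • sp + (K * u p) • sl) := by
    refine eq_sub_of_add_eq ?_
    have h0 := hkey u
    rw [hAu] at h0
    rw [← add_assoc]
    exact h0.symm
  have h10 : u = sl - ((K * u l) • w0 + (K * u p) • sl) := by
    have h11 := hBi u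
    rw [h9, mulVec_sub, mulVec_add, mulVec_smul, mulVec_smul, ← hw0, hBisl] at h11
    exact h11.symm
  have hup : u p = -(K * u l * t) := by
    have := congrFun h10 p
    simpa [hslp, ht, mul_assoc] using this
  have hul : u l = 1 - K * u p := by
    have := congrFun h10 l
    simpa [hsll, hw0l] using this
  have h12 : u l * (1 - K^2 * t) = 1 := by
    rw [hup] at hul
    nlinarith [hul]
  have hul0 : u l ≠ 0 := by
    intro h0; rw [h0] at h12; simp at h12
  have hd2 : d = 1 - K^2 * t := by
    rw [hd', div_eq_iff hul0]
    linarith [h12]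
  have h13 : 1 - d = (c-1)^2 := by rw [hd2, ← hKt]; ring
  rw [h13, Real.sqrt_sq_eq_abs]
  rcases le_total c 1 with h|h
  · right; left; rw [abs_of_nonpos (by linarith)]; ring
  · right; right; rw [abs_of_nonneg (by linarith)]; ring
end

section
/- Let G be the 3×3 symmetric tridiagonal matrix with zero diagonal and off-diagonal entries 1/√3 and 2/√15. For all v ∈ ℝ³ and all real a₀ > 0, a₁ with |a₁| ≤ a₀: (1 − √15/5) a₀ v^T v ≤ v^T (a₀ I + a₁ G) v ≤ (1 + √15/5) a₀ v^T v. Consequently, if A = I ⊗ F₀ + G ⊗ F₁ with F₀ symmetric positive definite and F₁ = c F₀ with |c| ≤ 1, and M = I ⊗ F₀, then κ(M^{-1}A) ≤ 4 + √15. -/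
open Matrix

open Kronecker

lemma absQ_aux (v : Fin 3 → ℝ) :
    |v ⬝ᵥ ((!![0, 1 / Real.sqrt 3, 0;
                 1 / Real.sqrt 3, 0, 2 / Real.sqrt 15;
                 0, 2 / Real.sqrt 15, 0] : Matrix (Fin 3) (Fin 3) ℝ) *ᵥ v)| ≤
      Real.sqrt 15 / 5 * (v ⬝ᵥ v) := by
  set s3 := Real.sqrt 3 with hs3
  set s5 := Real.sqrt 5 with hs5
  have h3 : (0:ℝ) < s3 := Real.sqrt_pos.2 (by norm_num)
  have h5 : (0:ℝ) < s5 := Real.sqrt_pos.2 (by norm_num)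
  have h3sq : s3^2 = 3 := Real.sq_sqrt (by norm_num)
  have h5sq : s5^2 = 5 := Real.sq_sqrt (by norm_num)
  have h15 : Real.sqrt 15 = s3 * s5 := by
    rw [hs3, hs5, ← Real.sqrt_mul (by norm_num : (0:ℝ) ≤ 3)]; norm_num
  have hX : v ⬝ᵥ v = v 0 ^ 2 + v 1 ^ 2 + v 2 ^ 2 := by
    simp [dotProduct, Fin.sum_univ_three]; ring
  have hQ : v ⬝ᵥ ((!![0, 1 / Real.sqrt 3, 0;
                 1 / Real.sqrt 3, 0, 2 / Real.sqrt 15;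
                 0, 2 / Real.sqrt 15, 0] : Matrix (Fin 3) (Fin 3) ℝ) *ᵥ v) =
      2 * s3 / 3 * (v 0 * v 1) + 4 * (s3 * s5) / 15 * (v 1 * v 2) := by
    simp only [dotProduct, mulVec, Fin.sum_univ_three, Matrix.of_apply, Matrix.cons_val_zero, Matrix.cons_val_one,
      Matrix.head_cons, Matrix.cons_val_two, Matrix.head_fin_const, Matrix.vecHead, Matrix.vecTail]
    rw [h15, ← hs3]
    have e1 : (1:ℝ) / s3 = s3 / 3 := by
      rw [div_eq_div_iff h3.ne' (by norm_num)]; nlinarith [h3sq]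
    have e2 : (2:ℝ) / (s3 * s5) = 2 * (s3 * s5) / 15 := by
      rw [div_eq_div_iff (by positivity) (by norm_num)]; nlinarith [h3sq, h5sq]
    simp only [Function.comp_apply, Fin.succ_zero_eq_one, Fin.succ_one_eq_two, e1, e2]
    simp only [Matrix.cons_val_one, Matrix.cons_val_zero, Matrix.head_cons, Matrix.cons_val_two,
      Matrix.vecHead, Matrix.vecTail, Function.comp_apply, Fin.succ_zero_eq_one]
    ring
  rw [hX, hQ, h15, abs_le]
  constructor
  · rw [neg_le, ← sub_nonneg]
    have key : s3 * s5 / 5 * (v 0 ^ 2 + v 1 ^ 2 + v 2 ^ 2) -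
        -(2 * s3 / 3 * (v 0 * v 1) + 4 * (s3 * s5) / 15 * (v 1 * v 2)) =
        s3 * s5 * ((s5*v 0 + 3*v 1 + 2*v 2)^2 + (2*v 0 - s5*v 2)^2) / 45 := by
      linear_combination (-(s3*s5*(v 0)^2)/45 - (2*s3/15)*(v 0*v 1) - s3*s5*(v 2)^2/45) * h5sq
    rw [key]; positivity
  · rw [← sub_nonneg]
    have key : s3 * s5 / 5 * (v 0 ^ 2 + v 1 ^ 2 + v 2 ^ 2) -
        (2 * s3 / 3 * (v 0 * v 1) + 4 * (s3 * s5) / 15 * (v 1 * v 2)) =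
        s3 * s5 * ((s5*v 0 - 3*v 1 + 2*v 2)^2 + (2*v 0 - s5*v 2)^2) / 45 := by
      linear_combination (-(s3*s5*(v 0)^2)/45 + (2*s3/15)*(v 0*v 1) - s3*s5*(v 2)^2/45) * h5sq
    rw [key]; positivity

lemma kronPSD_aux {n : ℕ} (P : Matrix (Fin 3) (Fin 3) ℝ) (F : Matrix (Fin n) (Fin n) ℝ)
    (hP : P.PosSemidef) (hF : F.PosSemidef) : (P ⊗ₖ F).PosSemidef := by
  exact hP.kronecker hF

lemma Mquadpos_aux {n : ℕ} (F0 : Matrix (Fin n) (Fin n) ℝ) (hF0 : F0.PosDef)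
    (v : Fin 3 × Fin n → ℝ) (hv : v ≠ 0) :
    0 < v ⬝ᵥ (((1 : Matrix (Fin 3) (Fin 3) ℝ) ⊗ₖ F0) *ᵥ v) := by
  have hmv : ∀ (p : Fin 3 × Fin n), (((1 : Matrix (Fin 3) (Fin 3) ℝ) ⊗ₖ F0) *ᵥ v) p =
      (F0 *ᵥ fun a => v (p.1, a)) p.2 := by
    intro p
    simp only [mulVec, dotProduct, kroneckerMap_apply, Fintype.sum_prod_type_right,
      Matrix.one_apply, ite_mul, one_mul, zero_mul]
    simp [Finset.sum_ite_eq]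
  have expand : v ⬝ᵥ (((1 : Matrix (Fin 3) (Fin 3) ℝ) ⊗ₖ F0) *ᵥ v) =
      ∑ i : Fin 3, (fun a => v (i, a)) ⬝ᵥ (F0 *ᵥ (fun a => v (i, a))) := by
    rw [dotProduct, Fintype.sum_prod_type]
    refine Finset.sum_congr rfl fun i _ => ?_
    rw [dotProduct]
    exact Finset.sum_congr rfl fun a _ => by rw [hmv (i, a)]
  rw [expand]
  obtain ⟨p, hp⟩ := Function.ne_iff.mp hv
  have hpos : 0 < (fun a => v (p.1, a)) ⬝ᵥ (F0 *ᵥ fun a => v (p.1, a)) := by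
    have hx : (fun a => v (p.1, a)) ≠ 0 := by
      intro h
      exact hp (by simpa using congrFun h p.2)
    simpa using hF0.dotProduct_mulVec_pos hx
  refine Finset.sum_pos' (fun i _ => ?_) ⟨p.1, Finset.mem_univ _, hpos⟩
  simpa using hF0.posSemidef.dotProduct_mulVec_nonneg (fun a => v (i, a))

/-- Example 3.5 — quadratic form bounds for a₀I + a₁G with the
3×3 Legendre Jacobi matrix G, and the resulting bound κ(M⁻¹A) ≤ 4 + √15 for
mean-based preconditioning. -/
theorem stmt_10 (G : Matrix (Fin 3) (Fin 3) ℝ)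
    (hG : G = !![0, 1 / Real.sqrt 3, 0;
                 1 / Real.sqrt 3, 0, 2 / Real.sqrt 15;
                 0, 2 / Real.sqrt 15, 0]) :
    (∀ (v : Fin 3 → ℝ) (a0 a1 : ℝ), 0 < a0 → |a1| ≤ a0 →
      (1 - Real.sqrt 15 / 5) * a0 * (v ⬝ᵥ v) ≤
          v ⬝ᵥ ((a0 • (1 : Matrix (Fin 3) (Fin 3) ℝ) + a1 • G) *ᵥ v) ∧
        v ⬝ᵥ ((a0 • (1 : Matrix (Fin 3) (Fin 3) ℝ) + a1 • G) *ᵥ v) ≤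
          (1 + Real.sqrt 15 / 5) * a0 * (v ⬝ᵥ v)) ∧
    (∀ (n : ℕ) (F0 F1 : Matrix (Fin n) (Fin n) ℝ) (c : ℝ), F0.PosDef → F1 = c • F0 →
      |c| ≤ 1 →
      ∀ (c1 c2 : ℝ) (v1 v2 : Fin 3 × Fin n → ℝ), v1 ≠ 0 → v2 ≠ 0 →
        (((1 : Matrix (Fin 3) (Fin 3) ℝ) ⊗ₖ F0 + G ⊗ₖ F1) *ᵥ v1 =
          c1 • (((1 : Matrix (Fin 3) (Fin 3) ℝ) ⊗ₖ F0) *ᵥ v1)) →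
        (((1 : Matrix (Fin 3) (Fin 3) ℝ) ⊗ₖ F0 + G ⊗ₖ F1) *ᵥ v2 =
          c2 • (((1 : Matrix (Fin 3) (Fin 3) ℝ) ⊗ₖ F0) *ᵥ v2)) →
        c1 ≤ (4 + Real.sqrt 15) * c2) := by
  have habsQ : ∀ v : Fin 3 → ℝ, |v ⬝ᵥ (G *ᵥ v)| ≤ Real.sqrt 15 / 5 * (v ⬝ᵥ v) := by
    intro v; rw [hG]; exact absQ_aux v
  have hXnn : ∀ v : Fin 3 → ℝ, 0 ≤ v ⬝ᵥ v := by
    intro v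
    simp only [dotProduct]
    exact Finset.sum_nonneg fun i _ => mul_self_nonneg _
  have hsplit : ∀ (v : Fin 3 → ℝ) (a0 a1 : ℝ),
      v ⬝ᵥ ((a0 • (1 : Matrix (Fin 3) (Fin 3) ℝ) + a1 • G) *ᵥ v) =
        a0 * (v ⬝ᵥ v) + a1 * (v ⬝ᵥ (G *ᵥ v)) := by
    intro v a0 a1
    rw [add_mulVec, dotProduct_add, smul_mulVec, smul_mulVec, one_mulVec,
      dotProduct_smul, dotProduct_smul, smul_eq_mul, smul_eq_mul]
  have part1 : ∀ (v : Fin 3 → ℝ) (a0 a1 : ℝ), 0 < a0 → |a1| ≤ a0 →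
      (1 - Real.sqrt 15 / 5) * a0 * (v ⬝ᵥ v) ≤
          v ⬝ᵥ ((a0 • (1 : Matrix (Fin 3) (Fin 3) ℝ) + a1 • G) *ᵥ v) ∧
        v ⬝ᵥ ((a0 • (1 : Matrix (Fin 3) (Fin 3) ℝ) + a1 • G) *ᵥ v) ≤
          (1 + Real.sqrt 15 / 5) * a0 * (v ⬝ᵥ v) := by
    intro v a0 a1 h0 h1
    rw [hsplit]
    have hq := habsQ v
    have habs : |a1 * (v ⬝ᵥ (G *ᵥ v))| ≤ a0 * (Real.sqrt 15 / 5 * (v ⬝ᵥ v)) := by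
      rw [abs_mul]
      exact mul_le_mul h1 hq (abs_nonneg _) h0.le
    have h2 := neg_abs_le (a1 * (v ⬝ᵥ (G *ᵥ v)))
    have h3 := le_abs_self (a1 * (v ⬝ᵥ (G *ᵥ v)))
    constructor <;> nlinarith [hXnn v]
  refine ⟨part1, ?_⟩
  intro n F0 F1 c hF0 hF1 hc c1 c2 v1 v2 hv1 hv2 he1 he2
  subst hF1
  set s := Real.sqrt 15 with hs
  have hsnn : (0:ℝ) ≤ s := Real.sqrt_nonneg _
  have hssq : s^2 = 15 := Real.sq_sqrt (by norm_num)
  have hslt : s < 5 := by nlinarith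
  -- rewrite A
  have hA : (1 : Matrix (Fin 3) (Fin 3) ℝ) ⊗ₖ F0 + G ⊗ₖ (c • F0) =
      (1 : Matrix (Fin 3) (Fin 3) ℝ) ⊗ₖ F0 + (c • G) ⊗ₖ F0 := by
    rw [Matrix.kronecker_smul, Matrix.smul_kronecker]
  -- the two PSD 3×3 matrices
  have hGherm : Gᴴ = G := by
    rw [hG]
    ext i j
    fin_cases i <;> fin_cases j <;> simp [conjTranspose_apply]
  have psd : ∀ t : ℝ, |t| ≤ 1 →
      ((s / 5) • (1 : Matrix (Fin 3) (Fin 3) ℝ) + t • G).PosSemidef := by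
    intro t ht
    apply Matrix.PosSemidef.of_dotProduct_mulVec_nonneg
    · show _ᴴ = _
      rw [conjTranspose_add, conjTranspose_smul, conjTranspose_smul, conjTranspose_one, hGherm]
      simp
    · intro x
      have hstar : star x = x := by
        funext a; simp
      rw [hstar, hsplit x (s/5) t]
      have hq := habsQ x
      have h2 := neg_abs_le (t * (x ⬝ᵥ (G *ᵥ x)))
      have habs : |t * (x ⬝ᵥ (G *ᵥ x))| ≤ 1 * (s / 5 * (x ⬝ᵥ x)) := by
        rw [abs_mul]
        exact mul_le_mul ht hq (abs_nonneg _) (by norm_num)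
      nlinarith [hXnn x]
  -- quadratic form inequalities for big matrices
  have quad : ∀ (t : ℝ), |t| ≤ 1 → ∀ (v : Fin 3 × Fin n → ℝ),
      0 ≤ v ⬝ᵥ ((((s / 5) • (1 : Matrix (Fin 3) (Fin 3) ℝ) + t • G) ⊗ₖ F0) *ᵥ v) := by
    intro t ht v
    have hk := kronPSD_aux _ F0 (psd t ht) hF0.posSemidef
    have := hk.dotProduct_mulVec_nonneg v
    have hstar : star v = v := by funext a; simp
    rwa [hstar] at this
  -- expand the kronecker quadratic form
  have hexp : ∀ (t : ℝ) (v : Fin 3 × Fin n → ℝ),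
      v ⬝ᵥ ((((s / 5) • (1 : Matrix (Fin 3) (Fin 3) ℝ) + t • G) ⊗ₖ F0) *ᵥ v) =
        (s / 5) * (v ⬝ᵥ (((1 : Matrix (Fin 3) (Fin 3) ℝ) ⊗ₖ F0) *ᵥ v)) +
          t * (v ⬝ᵥ ((G ⊗ₖ F0) *ᵥ v)) := by
    intro t v
    rw [Matrix.add_kronecker, Matrix.smul_kronecker, Matrix.smul_kronecker,
      add_mulVec, dotProduct_add, smul_mulVec, smul_mulVec,
      dotProduct_smul, dotProduct_smul, smul_eq_mul, smul_eq_mul]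
  -- eigen relations
  have hdot : ∀ (cc : ℝ) (v : Fin 3 × Fin n → ℝ),
      (((1 : Matrix (Fin 3) (Fin 3) ℝ) ⊗ₖ F0 + G ⊗ₖ (c • F0)) *ᵥ v =
        cc • (((1 : Matrix (Fin 3) (Fin 3) ℝ) ⊗ₖ F0) *ᵥ v)) →
      v ⬝ᵥ (((1 : Matrix (Fin 3) (Fin 3) ℝ) ⊗ₖ F0) *ᵥ v) +
          c * (v ⬝ᵥ ((G ⊗ₖ F0) *ᵥ v)) =
        cc * (v ⬝ᵥ (((1 : Matrix (Fin 3) (Fin 3) ℝ) ⊗ₖ F0) *ᵥ v)) := by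
    intro cc v hv
    have := congrArg (fun w => v ⬝ᵥ w) hv
    simp only at this
    rw [add_mulVec, dotProduct_add, dotProduct_smul, smul_eq_mul] at this
    rw [Matrix.kronecker_smul, smul_mulVec, dotProduct_smul, smul_eq_mul] at this
    exact this
  set m1 := v1 ⬝ᵥ (((1 : Matrix (Fin 3) (Fin 3) ℝ) ⊗ₖ F0) *ᵥ v1) with hm1
  set m2 := v2 ⬝ᵥ (((1 : Matrix (Fin 3) (Fin 3) ℝ) ⊗ₖ F0) *ᵥ v2) with hm2
  have hm1pos : 0 < m1 := Mquadpos_aux F0 hF0 v1 hv1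
  have hm2pos : 0 < m2 := Mquadpos_aux F0 hF0 v2 hv2
  have hrel1 := hdot c1 v1 he1
  have hrel2 := hdot c2 v2 he2
  -- upper bound for c1 : use t = -c
  have hcneg : |(-c)| ≤ 1 := by rwa [abs_neg]
  have hub := quad (-c) hcneg v1
  rw [hexp] at hub
  -- 0 ≤ (s/5) m1 - c * g1, and m1 + c g1 = c1 m1 → c1 m1 ≤ (1 + s/5) m1
  have hc1 : c1 ≤ 1 + s / 5 := by
    have : c1 * m1 ≤ (1 + s / 5) * m1 := by nlinarith
    exact le_of_mul_le_mul_right (by linarith) hm1pos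
  have hlb := quad c hc v2
  rw [hexp] at hlb
  have hc2 : 1 - s / 5 ≤ c2 := by
    have : (1 - s / 5) * m2 ≤ c2 * m2 := by nlinarith
    exact le_of_mul_le_mul_right (by linarith) hm2pos
  have hkey : (1 : ℝ) + s / 5 = (4 + s) * (1 - s / 5) := by nlinarith
  calc c1 ≤ 1 + s / 5 := hc1
    _ = (4 + s) * (1 - s / 5) := hkey
    _ ≤ (4 + s) * c2 := by
        apply mul_le_mul_of_nonneg_left hc2
        positivity
end

section
/- Under the assumptions: A = Σ_j (Σ_{k=0}^K a_k^{(j)} G_k) ⊗ F^{(j)} and M = Σ_j (a_0^{(j)} G_0) ⊗ F^{(j)}, where G_0 = I, each G_k is symmetric with spectral radius ≤ λ, each F^{(j)} is symmetric positive semidefinite, a_0^{(j)} > 0, Σ_{k=1}^K |a_k^{(j)}| ≤ μ a_0^{(j)}, μλ < 1, and M is positive definite. Then every eigenvalue of M^{-1}A lies in [1 − μλ, 1 + μλ], and hence κ(M^{-1}A) ≤ (1 + μλ)/(1 − μλ). -/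
open Matrix

open Kronecker

private lemma dot_sum' {ι N : Type*} [Fintype N] (s : Finset ι) (w : ι → N → ℝ) (v : N → ℝ) :
    v ⬝ᵥ (∑ j ∈ s, w j) = ∑ j ∈ s, v ⬝ᵥ w j := by
  simp only [dotProduct, Finset.sum_apply, Finset.mul_sum]
  rw [Finset.sum_comm]

private lemma sum_mulVec' {ι N : Type*} [Fintype N] (s : Finset ι) (X : ι → Matrix N N ℝ)
    (v : N → ℝ) : (∑ j ∈ s, X j) *ᵥ v = ∑ j ∈ s, X j *ᵥ v :=
  map_sum (Matrix.mulVec.addMonoidHomLeft v) X s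

private lemma kron_sum_left' {ι l m n p : Type*} (s : Finset ι)
    (X : ι → Matrix l m ℝ) (B : Matrix n p ℝ) :
    (∑ i ∈ s, X i) ⊗ₖ B = ∑ i ∈ s, (X i) ⊗ₖ B := by
  ext ⟨i1, i2⟩ ⟨j1, j2⟩
  simp [Matrix.sum_apply, Finset.sum_mul]

private lemma kron_psd' {m n : Type*} [Fintype m] [Fintype n] [DecidableEq m] [DecidableEq n]
    {P : Matrix m m ℝ} {Q : Matrix n n ℝ} (hP : P.PosSemidef) (hQ : Q.PosSemidef) :
    (P ⊗ₖ Q).PosSemidef := by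
  exact hP.kronecker hQ

private lemma shifted_psd' {n : Type*} [Fintype n] [DecidableEq n] {G : Matrix n n ℝ}
    (hG : G.IsHermitian) {lam : ℝ}
    (hb : ∀ i, |hG.eigenvalues i| ≤ lam) :
    (lam • (1 : Matrix n n ℝ) - G).PosSemidef ∧ (lam • (1 : Matrix n n ℝ) + G).PosSemidef := by
  set U : Matrix n n ℝ := (Matrix.IsHermitian.eigenvectorUnitary hG : Matrix n n ℝ) with hUdef
  have hGd : G = U * Matrix.diagonal (hG.eigenvalues) * star U := by
    have h := hG.spectral_theorem
    simpa [RCLike.ofReal_real_eq_id] using h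
  have hU1 : U * star U = 1 :=
    (Matrix.mem_unitaryGroup_iff).mp (Matrix.IsHermitian.eigenvectorUnitary hG).2
  have hid : lam • (1 : Matrix n n ℝ) = U * Matrix.diagonal (fun _ => lam) * star U := by
    have : Matrix.diagonal (fun _ : n => lam) = lam • (1 : Matrix n n ℝ) := by
      ext i j
      by_cases h : i = j <;>
        simp [Matrix.diagonal_apply, Matrix.one_apply, h]
    rw [this, Matrix.mul_smul, Matrix.mul_one, Matrix.smul_mul, hU1]
  constructor
  · have hdec : lam • (1 : Matrix n n ℝ) - G
        = U * Matrix.diagonal (fun i => lam - hG.eigenvalues i) * star U := by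
      have : Matrix.diagonal (fun i => lam - hG.eigenvalues i)
          = Matrix.diagonal (fun _ : n => lam) - Matrix.diagonal hG.eigenvalues := by
        rw [Matrix.diagonal_sub]
      rw [this, Matrix.mul_sub, Matrix.sub_mul, ← hid, ← hGd]
    rw [hdec, Matrix.star_eq_conjTranspose]
    exact Matrix.PosSemidef.mul_mul_conjTranspose_same
      (Matrix.PosSemidef.diagonal fun i => by have := abs_le.mp (hb i); simp; linarith) U
  · have hdec : lam • (1 : Matrix n n ℝ) + G
        = U * Matrix.diagonal (fun i => lam + hG.eigenvalues i) * star U := by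
      have : Matrix.diagonal (fun i => lam + hG.eigenvalues i)
          = Matrix.diagonal (fun _ : n => lam) + Matrix.diagonal hG.eigenvalues := by
        rw [Matrix.diagonal_add]
      rw [this, Matrix.mul_add, Matrix.add_mul, ← hid, ← hGd]
    rw [hdec, Matrix.star_eq_conjTranspose]
    exact Matrix.PosSemidef.mul_mul_conjTranspose_same
      (Matrix.PosSemidef.diagonal fun i => by have := abs_le.mp (hb i); simp; linarith) U

/-- mean-based preconditioning — all eigenvalues of M⁻¹A lie in
[1 − μλ, 1 + μλ], hence κ(M⁻¹A) ≤ (1 + μλ)/(1 − μλ)  (Lemma 4.2 / Corollary 4.3). -/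
theorem stmt_12 {NP NFE Nel K : ℕ}
    (G : Fin K → Matrix (Fin NP) (Fin NP) ℝ) (hGsymm : ∀ k, (G k).IsSymm)
    (lam μ : ℝ) (hlam : 0 ≤ lam) (hμ : 0 ≤ μ) (hμlam : μ * lam < 1)
    (heig : ∀ k, ∀ (c : ℝ) (v : Fin NP → ℝ), v ≠ 0 → G k *ᵥ v = c • v → |c| ≤ lam)
    (F : Fin Nel → Matrix (Fin NFE) (Fin NFE) ℝ) (hF : ∀ j, (F j).PosSemidef)
    (a0 : Fin Nel → ℝ) (ha0 : ∀ j, 0 < a0 j)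
    (a : Fin Nel → Fin K → ℝ) (hdom : ∀ j, ∑ k, |a j k| ≤ μ * a0 j)
    (A M : Matrix (Fin NP × Fin NFE) (Fin NP × Fin NFE) ℝ)
    (hA : A = ∑ j, (a0 j • (1 : Matrix (Fin NP) (Fin NP) ℝ) + ∑ k, a j k • G k) ⊗ₖ F j)
    (hM : M = ∑ j, (a0 j • (1 : Matrix (Fin NP) (Fin NP) ℝ)) ⊗ₖ F j)
    (hMpd : M.PosDef) :
    (∀ (c : ℝ) (v : Fin NP × Fin NFE → ℝ), v ≠ 0 → (M⁻¹ * A) *ᵥ v = c • v →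
        1 - μ * lam ≤ c ∧ c ≤ 1 + μ * lam) ∧
      (∀ (c1 c2 : ℝ) (v1 v2 : Fin NP × Fin NFE → ℝ), v1 ≠ 0 → v2 ≠ 0 →
        (M⁻¹ * A) *ᵥ v1 = c1 • v1 → (M⁻¹ * A) *ᵥ v2 = c2 • v2 →
          c1 ≤ ((1 + μ * lam) / (1 - μ * lam)) * c2) := by
  classical
  have hGherm : ∀ k, (G k).IsHermitian := fun k => by
    rw [Matrix.IsHermitian, Matrix.conjTranspose_eq_transpose_of_trivial]; exact hGsymm k
  have hbk : ∀ k,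
      (lam • (1 : Matrix (Fin NP) (Fin NP) ℝ) - G k).PosSemidef ∧
      (lam • (1 : Matrix (Fin NP) (Fin NP) ℝ) + G k).PosSemidef := by
    intro k
    refine shifted_psd' (hGherm k) fun i => ?_
    refine heig k _ _ ?_ ((hGherm k).mulVec_eigenvectorBasis i)
    simpa using ((hGherm k).eigenvectorBasis).toBasis.ne_zero i
  have hNpsd : ∀ j, ((1 : Matrix (Fin NP) (Fin NP) ℝ) ⊗ₖ F j).PosSemidef := fun j =>
    kron_psd' Matrix.PosSemidef.one (hF j)
  -- the key quadratic-form estimate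
  have key : ∀ v : Fin NP × Fin NFE → ℝ,
      |v ⬝ᵥ ((A - M) *ᵥ v)| ≤ (μ * lam) * (v ⬝ᵥ (M *ᵥ v)) := by
    intro v
    set Q1 : Fin Nel → ℝ :=
      fun j => v ⬝ᵥ (((1 : Matrix (Fin NP) (Fin NP) ℝ) ⊗ₖ F j) *ᵥ v) with hQ1def
    have hQ1 : ∀ j, 0 ≤ Q1 j := fun j => by
      simpa [star_trivial] using (hNpsd j).dotProduct_mulVec_nonneg v
    have hGb : ∀ k j, |v ⬝ᵥ ((G k ⊗ₖ F j) *ᵥ v)| ≤ lam * Q1 j := by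
      intro k j
      have h1 := (kron_psd' (hbk k).1 (hF j)).dotProduct_mulVec_nonneg v
      have h2 := (kron_psd' (hbk k).2 (hF j)).dotProduct_mulVec_nonneg v
      have e1 : (lam • (1 : Matrix (Fin NP) (Fin NP) ℝ) - G k) ⊗ₖ F j
          = lam • ((1 : Matrix (Fin NP) (Fin NP) ℝ) ⊗ₖ F j) - (G k ⊗ₖ F j) := by
        ext ⟨i1, i2⟩ ⟨j1, j2⟩
        simp [Matrix.sub_apply, sub_mul, mul_assoc]
      have e2 : (lam • (1 : Matrix (Fin NP) (Fin NP) ℝ) + G k) ⊗ₖ F j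
          = lam • ((1 : Matrix (Fin NP) (Fin NP) ℝ) ⊗ₖ F j) + (G k ⊗ₖ F j) := by
        ext ⟨i1, i2⟩ ⟨j1, j2⟩
        simp [Matrix.add_apply, add_mul, mul_assoc]
      rw [e1] at h1
      rw [e2] at h2
      simp only [star_trivial, Matrix.sub_mulVec, Matrix.add_mulVec,
        Matrix.smul_mulVec, dotProduct_sub, dotProduct_add, dotProduct_smul,
        smul_eq_mul] at h1 h2
      rw [abs_le]
      constructor
      · nlinarith [h2]
      · nlinarith [h1]
    have hAM : A - M = ∑ j, ∑ k, (a j k • G k) ⊗ₖ F j := by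
      rw [hA, hM, ← Finset.sum_sub_distrib]
      refine Finset.sum_congr rfl fun j _ => ?_
      rw [Matrix.add_kronecker, add_sub_cancel_left, kron_sum_left']
    have hquad : v ⬝ᵥ ((A - M) *ᵥ v)
        = ∑ j, ∑ k, a j k * (v ⬝ᵥ ((G k ⊗ₖ F j) *ᵥ v)) := by
      rw [hAM, sum_mulVec', dot_sum']
      refine Finset.sum_congr rfl fun j _ => ?_
      rw [sum_mulVec', dot_sum']
      refine Finset.sum_congr rfl fun k _ => ?_
      rw [Matrix.smul_kronecker, Matrix.smul_mulVec, dotProduct_smul, smul_eq_mul]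
    have hMq : v ⬝ᵥ (M *ᵥ v) = ∑ j, a0 j * Q1 j := by
      rw [hM, sum_mulVec', dot_sum']
      refine Finset.sum_congr rfl fun j _ => ?_
      rw [Matrix.smul_kronecker, Matrix.smul_mulVec, dotProduct_smul, smul_eq_mul]
    rw [hquad, hMq]
    calc |∑ j, ∑ k, a j k * (v ⬝ᵥ ((G k ⊗ₖ F j) *ᵥ v))|
        ≤ ∑ j, |∑ k, a j k * (v ⬝ᵥ ((G k ⊗ₖ F j) *ᵥ v))| :=
          Finset.abs_sum_le_sum_abs _ _
      _ ≤ ∑ j, (μ * lam) * (a0 j * Q1 j) := by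
          refine Finset.sum_le_sum fun j _ => ?_
          calc |∑ k, a j k * (v ⬝ᵥ ((G k ⊗ₖ F j) *ᵥ v))|
              ≤ ∑ k, |a j k * (v ⬝ᵥ ((G k ⊗ₖ F j) *ᵥ v))| :=
                Finset.abs_sum_le_sum_abs _ _
            _ ≤ ∑ k, |a j k| * (lam * Q1 j) := by
                refine Finset.sum_le_sum fun k _ => ?_
                rw [abs_mul]
                exact mul_le_mul_of_nonneg_left (hGb k j) (abs_nonneg _)
            _ = (∑ k, |a j k|) * (lam * Q1 j) := by rw [Finset.sum_mul]
            _ ≤ (μ * a0 j) * (lam * Q1 j) := by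
                refine mul_le_mul_of_nonneg_right (hdom j) ?_
                exact mul_nonneg hlam (hQ1 j)
            _ = (μ * lam) * (a0 j * Q1 j) := by ring
      _ = (μ * lam) * ∑ j, a0 j * Q1 j := by rw [Finset.mul_sum]
  -- invertibility of M
  have hdet : IsUnit M.det := hMpd.det_pos.ne'.isUnit
  have hMM : M * M⁻¹ = 1 := Matrix.mul_nonsing_inv M hdet
  have hMA : M * (M⁻¹ * A) = A := by rw [← Matrix.mul_assoc, hMM, Matrix.one_mul]
  have eig_bound : ∀ (c : ℝ) (v : Fin NP × Fin NFE → ℝ), v ≠ 0 →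
      (M⁻¹ * A) *ᵥ v = c • v → |c - 1| ≤ μ * lam := by
    intro c v hv0 hv
    have hAv : A *ᵥ v = c • (M *ᵥ v) := by
      have h := congrArg (fun w => M *ᵥ w) hv
      simpa only [Matrix.mulVec_mulVec, hMA, Matrix.mulVec_smul] using h
    have hqM : 0 < v ⬝ᵥ (M *ᵥ v) := by
      simpa [star_trivial] using hMpd.dotProduct_mulVec_pos hv0
    have hAq : v ⬝ᵥ (A *ᵥ v) = c * (v ⬝ᵥ (M *ᵥ v)) := by
      rw [hAv, dotProduct_smul, smul_eq_mul]
    have h := key v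
    rw [Matrix.sub_mulVec, dotProduct_sub, hAq] at h
    have h2 : |c - 1| * (v ⬝ᵥ (M *ᵥ v)) ≤ (μ * lam) * (v ⬝ᵥ (M *ᵥ v)) := by
      calc |c - 1| * (v ⬝ᵥ (M *ᵥ v)) = |(c - 1) * (v ⬝ᵥ (M *ᵥ v))| := by
            rw [abs_mul, abs_of_pos hqM]
        _ = |c * (v ⬝ᵥ (M *ᵥ v)) - v ⬝ᵥ (M *ᵥ v)| := by ring_nf
        _ ≤ _ := h
    exact le_of_mul_le_mul_right h2 hqM
  have part1 : ∀ (c : ℝ) (v : Fin NP × Fin NFE → ℝ), v ≠ 0 →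
      (M⁻¹ * A) *ᵥ v = c • v → 1 - μ * lam ≤ c ∧ c ≤ 1 + μ * lam := by
    intro c v hv0 hv
    have h := abs_le.mp (eig_bound c v hv0 hv)
    exact ⟨by linarith [h.1], by linarith [h.2]⟩
  refine ⟨part1, ?_⟩
  intro c1 c2 v1 v2 h1 h2 he1 he2
  have hb1 := part1 c1 v1 h1 he1
  have hb2 := part1 c2 v2 h2 he2
  have hden : 0 < 1 - μ * lam := by linarith
  have hnum : 0 ≤ 1 + μ * lam := by nlinarith [mul_nonneg hμ hlam]
  calc c1 ≤ 1 + μ * lam := hb1.2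
    _ = ((1 + μ * lam) / (1 - μ * lam)) * (1 - μ * lam) := by
        rw [div_mul_cancel₀ _ hden.ne']
    _ ≤ ((1 + μ * lam) / (1 - μ * lam)) * c2 :=
        mul_le_mul_of_nonneg_left hb2.1 (div_nonneg hnum hden.le)
end

section
/- Truncated-expansion preconditioning: with G_0 = I, symmetric G_1,…,G_K each of spectral radius ≤ λ, coefficients a_0^{(j)} > 0, Σ_{k=1}^K |a_k^{(j)}| ≤ μ a_0^{(j)}, and μλ < 1, define for each j the matrices S^{(j)} = Σ_{k=0}^{K} a_k^{(j)} G_k and T^{(j)} = Σ_{k=0}^{K−1} a_k^{(j)} G_k. Then (1 − μλ) v^T T^{(j)} v ≤ v^T S^{(j)} v ≤ (1 + μλ) v^T T^{(j)} v for all v ∈ ℝ^{N_P}. -/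
open Matrix

lemma rayleigh_bound {n : ℕ} (A : Matrix (Fin n) (Fin n) ℝ) (hA : A.IsSymm)
    (lam : ℝ)
    (h : ∀ (c : ℝ) (v : Fin n → ℝ), v ≠ 0 → A *ᵥ v = c • v → |c| ≤ lam)
    (v : Fin n → ℝ) : |v ⬝ᵥ (A *ᵥ v)| ≤ lam * (v ⬝ᵥ v) := by
  have hH : A.IsHermitian := hA
  set U : Matrix (Fin n) (Fin n) ℝ := (hH.eigenvectorUnitary : Matrix (Fin n) (Fin n) ℝ) with hU
  set w : Fin n → ℝ := (star U) *ᵥ v with hw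
  have heigb : ∀ i, |hH.eigenvalues i| ≤ lam := fun i =>
    h _ _ ((WithLp.ofLp_eq_zero 2).ne.2 <| hH.eigenvectorBasis.orthonormal.ne_zero i) (hH.mulVec_eigenvectorBasis i)
  have hUU : U * star U = 1 := (Matrix.mem_unitaryGroup_iff).mp hH.eigenvectorUnitary.2
  have hvU : v ᵥ* U = w := by
    rw [hw]; ext i; simp [vecMul, mulVec, dotProduct, conjTranspose, mul_comm]
  have hvv : v ⬝ᵥ v = ∑ i, w i * w i := by
    have h2 : v ⬝ᵥ ((U * star U) *ᵥ v) = ∑ i, w i * w i := by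
      rw [← mulVec_mulVec, dotProduct_mulVec, hvU, ← hw]; rfl
    rw [hUU, one_mulVec] at h2; exact h2
  have hq : v ⬝ᵥ (A *ᵥ v) = ∑ i, hH.eigenvalues i * (w i * w i) := by
    conv_lhs => rw [hH.spectral_theorem, Unitary.conjStarAlgAut_apply]
    rw [← mulVec_mulVec, ← mulVec_mulVec, dotProduct_mulVec, hvU, ← hw]
    simp [mulVec_diagonal, dotProduct, mul_comm, mul_assoc, mul_left_comm]
  rw [hq, hvv, Finset.mul_sum]
  refine (Finset.abs_sum_le_sum_abs _ _).trans (Finset.sum_le_sum fun i _ => ?_)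
  rw [abs_mul, abs_mul, abs_mul_abs_self]
  exact mul_le_mul_of_nonneg_right (heigb i) (mul_self_nonneg _)

/-- element-level inequality for truncated-expansion preconditioning
(Lemma 4.4). -/
theorem stmt_13 {NP : ℕ} (K : ℕ) (hK : 1 ≤ K)
    (G : ℕ → Matrix (Fin NP) (Fin NP) ℝ)
    (hG0 : G 0 = 1) (hGsymm : ∀ k, 1 ≤ k → k ≤ K → (G k).IsSymm)
    (lam μ : ℝ) (hlam : 0 ≤ lam) (hμ : 0 ≤ μ) (hμlam : μ * lam < 1)
    (heig : ∀ k, 1 ≤ k → k ≤ K →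
      ∀ (c : ℝ) (v : Fin NP → ℝ), v ≠ 0 → G k *ᵥ v = c • v → |c| ≤ lam)
    (a : ℕ → ℝ) (ha0 : 0 < a 0)
    (hdom : ∑ k ∈ Finset.Icc 1 K, |a k| ≤ μ * a 0) :
    ∀ v : Fin NP → ℝ,
      (1 - μ * lam) * (v ⬝ᵥ ((∑ k ∈ Finset.range K, a k • G k) *ᵥ v)) ≤
          v ⬝ᵥ ((∑ k ∈ Finset.range (K + 1), a k • G k) *ᵥ v) ∧
        v ⬝ᵥ ((∑ k ∈ Finset.range (K + 1), a k • G k) *ᵥ v) ≤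
          (1 + μ * lam) * (v ⬝ᵥ ((∑ k ∈ Finset.range K, a k • G k) *ᵥ v)) := by
  intro v
  set Q : ℕ → ℝ := fun k => v ⬝ᵥ (G k *ᵥ v) with hQ
  have expand : ∀ m, v ⬝ᵥ ((∑ k ∈ Finset.range m, a k • G k) *ᵥ v)
      = ∑ k ∈ Finset.range m, a k * Q k := by
    intro m
    induction m with
    | zero => simp
    | succ n ih =>
      rw [Finset.sum_range_succ, Finset.sum_range_succ, add_mulVec, dotProduct_add, ih,
        smul_mulVec, dotProduct_smul, smul_eq_mul]
  set N : ℝ := v ⬝ᵥ v with hN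
  have hN0 : 0 ≤ N := by
    simp only [hN, dotProduct]
    exact Finset.sum_nonneg fun i _ => mul_self_nonneg _
  have hQ0 : Q 0 = N := by simp [hQ, hG0, hN]
  have hQb : ∀ k, 1 ≤ k → k ≤ K → |Q k| ≤ lam * N :=
    fun k h1 h2 => rayleigh_bound _ (hGsymm k h1 h2) lam (heig k h1 h2) v
  set s : ℝ := ∑ k ∈ Finset.Icc 1 (K - 1), |a k| with hs
  have hs0 : 0 ≤ s := Finset.sum_nonneg fun k _ => abs_nonneg _
  have hsplit : s + |a K| ≤ μ * a 0 := by
    have hins : Finset.Icc 1 K = insert K (Finset.Icc 1 (K - 1)) := by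
      ext x; simp only [Finset.mem_Icc, Finset.mem_insert]; omega
    have hnm : K ∉ Finset.Icc 1 (K - 1) := by
      simp only [Finset.mem_Icc]; omega
    rw [hins, Finset.sum_insert hnm] at hdom
    rw [hs]; linarith
  -- T decomposition
  set R : ℝ := ∑ k ∈ Finset.Icc 1 (K - 1), a k * Q k with hR
  have hT : ∑ k ∈ Finset.range K, a k * Q k = a 0 * N + R := by
    rw [Finset.range_eq_Ico, Finset.sum_eq_sum_Ico_succ_bot (by omega : 0 < K)]
    rw [hQ0, hR]
    have he : Finset.Ico 1 K = Finset.Icc 1 (K - 1) := by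
      ext x; simp only [Finset.mem_Icc, Finset.mem_Ico]; omega
    rw [he]
  have hRb : |R| ≤ lam * N * s := by
    rw [hR, hs, Finset.mul_sum]
    refine (Finset.abs_sum_le_sum_abs _ _).trans (Finset.sum_le_sum fun k hk => ?_)
    rw [Finset.mem_Icc] at hk
    rw [abs_mul]
    exact le_trans (mul_le_mul_of_nonneg_left (hQb k hk.1 (by omega)) (abs_nonneg _))
      (le_of_eq (by ring))
  have hQKb : |a K * Q K| ≤ |a K| * (lam * N) := by
    rw [abs_mul]
    exact mul_le_mul_of_nonneg_left (hQb K hK le_rfl) (abs_nonneg _)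
  have hS : ∑ k ∈ Finset.range (K + 1), a k * Q k
      = (a 0 * N + R) + a K * Q K := by
    rw [Finset.sum_range_succ, hT]
  rw [expand, expand, hT, hS]
  have h1 := abs_le.mp hRb
  have h2 := abs_le.mp hQKb
  have h3 : 0 ≤ |a K| := abs_nonneg _
  constructor
  · nlinarith [mul_nonneg (mul_nonneg hlam hN0) hs0, mul_nonneg hμ hlam,
      mul_nonneg (mul_nonneg (mul_nonneg hμ hlam) (mul_nonneg hlam hN0)) hs0,
      mul_le_mul_of_nonneg_left h1.1 (mul_nonneg hμ hlam),
      mul_nonneg (mul_nonneg hlam hN0) (by linarith : (0:ℝ) ≤ μ * a 0 - s - |a K|),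
      mul_nonneg (mul_nonneg hs0 (mul_nonneg hlam hN0)) (by linarith : (0:ℝ) ≤ 1 - μ * lam)]
  · nlinarith [mul_nonneg (mul_nonneg hlam hN0) hs0, mul_nonneg hμ hlam,
      mul_le_mul_of_nonneg_left h1.1 (mul_nonneg hμ hlam),
      mul_nonneg (mul_nonneg hlam hN0) (by linarith : (0:ℝ) ≤ μ * a 0 - s - |a K|),
      mul_nonneg (mul_nonneg hs0 (mul_nonneg hlam hN0)) (by linarith : (0:ℝ) ≤ 1 - μ * lam)]
end

section
/- Strengthened Cauchy–Bunyakowski–Schwarz bound from spectral equivalence: let V = U ⊕ W be a direct-sum decomposition of a finite-dimensional inner product space with inner product (·,·)_A, and define (u,v)_M = (u_U, v_U)_A + (u_W, v_W)_A for the unique decompositions u = u_U + u_W, v = v_U + v_W. Suppose c_lo (v,v)_M ≤ (v,v)_A ≤ c_hi (v,v)_M for all v ∈ V with c_lo = 2 − c_hi > 0. Then the CBS constant γ = sup{ (u,w)_A / (‖u‖_A ‖w‖_A) : 0 ≠ u ∈ U, 0 ≠ w ∈ W } satisfies γ ≤ c_hi − 1. -/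
/-- strengthened Cauchy–Bunyakowski–Schwarz bound from the spectral
equivalence of the splitting-based inner product (Remark 4.13). -/
theorem stmt_18 {V : Type*} [NormedAddCommGroup V] [InnerProductSpace ℝ V]
    [FiniteDimensional ℝ V] (U W : Submodule ℝ V) (hcompl : IsCompl U W)
    (clo chi : ℝ) (hclo : 0 < clo) (hsum : clo = 2 - chi)
    (hequiv : ∀ u ∈ U, ∀ w ∈ W,
      clo * (‖u‖ ^ 2 + ‖w‖ ^ 2) ≤ ‖u + w‖ ^ 2 ∧
        ‖u + w‖ ^ 2 ≤ chi * (‖u‖ ^ 2 + ‖w‖ ^ 2)) :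
    ∀ u ∈ U, ∀ w ∈ W, u ≠ 0 → w ≠ 0 →
      (inner ℝ u w : ℝ) / (‖u‖ * ‖w‖) ≤ chi - 1 := by
  intro u hu w hw hu0 hw0
  have ha : (0:ℝ) < ‖u‖ := norm_pos_iff.mpr hu0
  have hb : (0:ℝ) < ‖w‖ := norm_pos_iff.mpr hw0
  set u' := (‖u‖)⁻¹ • u with hu'
  set w' := (‖w‖)⁻¹ • w with hw'
  have hnu : ‖u'‖ = 1 := by
    rw [hu', norm_smul, norm_inv, norm_norm, inv_mul_cancel₀ ha.ne']
  have hnw : ‖w'‖ = 1 := by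
    rw [hw', norm_smul, norm_inv, norm_norm, inv_mul_cancel₀ hb.ne']
  have hmem : u' ∈ U := U.smul_mem _ hu
  have hmem' : w' ∈ W := W.smul_mem _ hw
  have h := (hequiv u' hmem w' hmem').2
  rw [hnu, hnw, norm_add_sq_real, hnu, hnw] at h
  have hip : (inner ℝ u' w' : ℝ) = (‖u‖)⁻¹ * ((‖w‖)⁻¹ * inner ℝ u w) := by
    rw [hu', hw', real_inner_smul_left, real_inner_smul_right]
  have h2 : (inner ℝ u' w' : ℝ) ≤ chi - 1 := by nlinarith
  rw [hip] at h2
  rw [div_le_iff₀ (by positivity)]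
  calc (inner ℝ u w : ℝ) = (‖u‖ * ‖w‖) * ((‖u‖)⁻¹ * ((‖w‖)⁻¹ * inner ℝ u w)) := by
        field_simp
    _ ≤ (‖u‖ * ‖w‖) * (chi - 1) := by
        exact mul_le_mul_of_nonneg_left h2 (by positivity)
    _ = (chi - 1) * (‖u‖ * ‖w‖) := by ring
end
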